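/- arXiv:1607.08104 — 5 statements merged into one kernel-verified Lean document; each statement's English description precedes it below -/
import Mathlib

section
/- For every real number a > 1 and integers j0 ≥ l0 ≥ 1 such that 0 < 1 - a/l < 1 for all l ≥ l0, the series ∑_{j=j0}^∞ ∏_{l=l0}^{j} (1 - a/l) converges. -/
open Finset

/-- For every real `a > 1` and integers `j0 ≥ l0 ≥ 1` such that `0 < 1 - a/l < 1`
for all `l ≥ l0`, the series `∑_{j=j0}^∞ ∏_{l=l0}^{j} (1 - a/l)` converges. -/
theorem stmt_0 (a : ℝ) (ha : 1 < a) (l0 j0 : ℕ) (hl0 : 1 ≤ l0) (hj0 : l0 ≤ j0)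
    (h : ∀ l : ℕ, l0 ≤ l → 0 < 1 - a / (l : ℝ) ∧ 1 - a / (l : ℝ) < 1) :
    Summable (fun j : ℕ => ∏ l ∈ Finset.Icc l0 (j0 + j), (1 - a / (l : ℝ))) := by
  set f : ℕ → ℝ := fun j => ∏ l ∈ Finset.Icc l0 (j0 + j), (1 - a / (l : ℝ)) with hf
  have hfpos : ∀ j, 0 < f j := by
    intro j
    apply Finset.prod_pos
    intro l hl
    exact (h l (Finset.mem_Icc.mp hl).1).1
  have hrec : ∀ j : ℕ, f (j + 1) = f j * (1 - a / ((j0 : ℝ) + j + 1)) := by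
    intro j
    simp only [hf]
    rw [show j0 + (j + 1) = (j0 + j) + 1 from rfl,
      Finset.prod_Icc_succ_top (by omega : l0 ≤ j0 + j + 1)]
    push_cast
    ring
  have key : ∀ N : ℕ, (a - 1) * ∑ j ∈ Finset.range N, f j
      = (j0 : ℝ) * f 0 - ((j0 : ℝ) + N) * f N := by
    intro N
    induction N with
    | zero => simp
    | succ N ih =>
      rw [Finset.sum_range_succ, mul_add, ih, hrec N]
      have hne : ((j0 : ℝ) + N + 1) ≠ 0 := by positivity
      push_cast
      field_simp
      ring
  apply summable_of_sum_range_le (c := (j0 : ℝ) * f 0 / (a - 1))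
  · intro n; exact (hfpos n).le
  · intro N
    have ha1 : 0 < a - 1 := by linarith
    rw [le_div_iff₀ ha1, mul_comm, key N]
    have : 0 ≤ ((j0 : ℝ) + N) * f N := mul_nonneg (by positivity) (hfpos N).le
    linarith
end

section
/- For a complex number w with π/4 < |Re w| < π/2, one has |tan w| ≤ tan |Re w| < 1/(π/2 - |Re w|). -/
open Real

/-- For a complex number `w` with `π/4 < |Re w| < π/2`, one has
`|tan w| ≤ tan |Re w| < 1/(π/2 - |Re w|)`. -/
theorem stmt_4 (w : ℂ) (h1 : π / 4 < |w.re|) (h2 : |w.re| < π / 2) :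
    ‖Complex.tan w‖ ≤ Real.tan |w.re| ∧
    Real.tan |w.re| < 1 / (π / 2 - |w.re|) := by
  set x := |w.re| with hxdef
  have hpi : (0:ℝ) < π := Real.pi_pos
  have hx0 : 0 < x := lt_trans (by positivity) h1
  have hcospos : 0 < Real.cos x := Real.cos_pos_of_mem_Ioo ⟨by linarith, h2⟩
  have hsinpos : 0 < Real.sin x := Real.sin_pos_of_pos_of_lt_pi hx0 (by linarith)
  have hcs : Real.cos x < Real.sin x := by
    have h1' : Real.cos x < Real.cos (π/4) :=
      Real.cos_lt_cos_of_nonneg_of_le_pi (by linarith) (by linarith) h1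
    have h2' : Real.sin (π/4) < Real.sin x :=
      Real.sin_lt_sin_of_lt_of_le_pi_div_two (by linarith) h2.le h1
    rw [Real.cos_pi_div_four] at h1'
    rw [Real.sin_pi_div_four] at h2'
    linarith
  constructor
  · -- |tan w| ≤ tan x
    set s := Real.sinh w.im with hs
    have hsin2 : Real.sin w.re ^ 2 = Real.sin x ^ 2 := by
      rcases abs_cases w.re with ⟨h, _⟩ | ⟨h, _⟩ <;> rw [hxdef, h] <;>
        simp [Real.sin_neg]
    have hcos2 : Real.cos w.re ^ 2 = Real.cos x ^ 2 := by
      rw [hxdef, Real.cos_abs]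
    have hsinw : Complex.sin w =
        Complex.ofReal (Real.sin w.re * Real.cosh w.im) +
        Complex.ofReal (Real.cos w.re * Real.sinh w.im) * Complex.I := by
      rw [Complex.sin_eq]
      push_cast
      ring
    have hcosw : Complex.cos w =
        Complex.ofReal (Real.cos w.re * Real.cosh w.im) +
        Complex.ofReal (-(Real.sin w.re * Real.sinh w.im)) * Complex.I := by
      rw [Complex.cos_eq]
      push_cast
      ring
    have hA : ‖Complex.sin w‖ ^ 2 = Real.sin x ^ 2 + s ^ 2 := by
      rw [hsinw, Complex.sq_norm, Complex.normSq_add_mul_I]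
      have hch : Real.cosh w.im ^ 2 = Real.sinh w.im ^ 2 + 1 := Real.cosh_sq w.im
      have hsc : Real.sin w.re ^ 2 + Real.cos w.re ^ 2 = 1 := Real.sin_sq_add_cos_sq w.re
      nlinarith [hsin2, hcos2]
    have hB : ‖Complex.cos w‖ ^ 2 = Real.cos x ^ 2 + s ^ 2 := by
      rw [hcosw, Complex.sq_norm, Complex.normSq_add_mul_I]
      have hch : Real.cosh w.im ^ 2 = Real.sinh w.im ^ 2 + 1 := Real.cosh_sq w.im
      have hsc : Real.sin w.re ^ 2 + Real.cos w.re ^ 2 = 1 := Real.sin_sq_add_cos_sq w.re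
      nlinarith [hsin2, hcos2]
    have hBpos : 0 < ‖Complex.cos w‖ := by
      rcases (norm_nonneg (Complex.cos w)).lt_or_eq with h | h
      · exact h
      · exfalso; rw [← h] at hB; nlinarith [sq_nonneg s]
    rw [Complex.tan_eq_sin_div_cos, norm_div, Real.tan_eq_sin_div_cos,
      div_le_div_iff₀ hBpos hcospos]
    have hAnn : 0 ≤ ‖Complex.sin w‖ := norm_nonneg _
    have hsq : (‖Complex.sin w‖ * Real.cos x) ^ 2 ≤
        (Real.sin x * ‖Complex.cos w‖) ^ 2 := by
      have hc2 : Real.cos x ^ 2 ≤ Real.sin x ^ 2 :=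
        pow_le_pow_left₀ hcospos.le hcs.le 2
      nlinarith [mul_nonneg (sq_nonneg s) (sub_nonneg.mpr hc2)]
    have h1 : 0 ≤ ‖Complex.sin w‖ * Real.cos x := by positivity
    have h2 : 0 ≤ Real.sin x * ‖Complex.cos w‖ := by positivity
    nlinarith [hsq, h1, h2]
  · -- tan x < 1/(π/2 - x)
    set t := π/2 - x with ht
    have ht0 : 0 < t := by simp [ht]; linarith
    have ht2 : t < π/2 := by simp [ht]; linarith
    have hlt : t < Real.tan t := Real.lt_tan ht0 ht2
    have hcost : 0 < Real.cos t := Real.cos_pos_of_mem_Ioo ⟨by linarith, ht2⟩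
    rw [Real.tan_eq_sin_div_cos] at hlt
    have key : t * Real.sin x < Real.cos x := by
      have h1' : Real.sin t = Real.cos x := by
        rw [ht, Real.sin_pi_div_two_sub]
      have h2' : Real.cos t = Real.sin x := by
        rw [ht, Real.cos_pi_div_two_sub]
      rw [lt_div_iff₀ hcost] at hlt
      rw [← h1', ← h2']
      linarith
    rw [Real.tan_eq_sin_div_cos, div_lt_div_iff₀ hcospos ht0]
    linarith [mul_pos ht0 hsinpos]
end

section
/- Let ε ≠ 0 and u_ε(x) = (1/(2iε)) log((iε-x)/(iε+x)). If a complex number x satisfies -π/(2|ε|) < Re((ε/|ε|)·u_ε(x)) < -π/(4|ε|), then |x| ≤ 1/(π/(2|ε|) + Re((ε/|ε|)·u_ε(x))). -/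
open Real

private lemma my_arctan_le_self {u : ℝ} (hu : 0 ≤ u) : Real.arctan u ≤ u := by
  have h0 : 0 ≤ Real.arctan u := by
    simpa using Real.arctan_strictMono.monotone hu
  have := Real.le_tan h0 (Real.arctan_lt_pi_div_two u)
  rwa [Real.tan_arctan] at this

private lemma my_geom (a x : ℂ) (r : ℝ) (hr : 0 < r) (har : ‖a‖ = r)
    (hθ1 : -π < ((a - x) / (a + x)).arg) (hθ2 : ((a - x) / (a + x)).arg < -(π / 2)) :
    ‖x‖ * (π + ((a - x) / (a + x)).arg) ≤ 2 * r := by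
  set w : ℂ := (a - x) / (a + x) with hw
  set θ := w.arg with hθdef
  rcases le_or_gt (‖x‖) r with hcase | hcase
  · nlinarith [norm_nonneg x, Real.pi_le_four, Real.pi_pos]
  · have hx0 : (0:ℝ) < ‖x‖ := hr.trans hcase
    have hxa : a + x ≠ 0 := by
      intro h
      rw [hw, h, div_zero] at hθdef
      rw [hθdef, Complex.arg_zero] at hθ2
      linarith [Real.pi_pos]
    have hwim : w.im < 0 := Complex.arg_neg_iff.mp (by linarith [Real.pi_pos])
    have hargneg : (-w).arg = θ + π := Complex.arg_neg_eq_arg_add_pi_of_im_neg hwim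
    set v : ℂ := (x - a) * (starRingEnd ℂ) (a + x) with hv
    have hveq : -w = v * ((Complex.normSq (a + x))⁻¹ : ℝ) := by
      rw [hw, hv, div_eq_mul_inv, Complex.inv_def]
      push_cast
      ring
    have hargv : (-w).arg = v.arg := by
      rw [hveq]
      exact Complex.arg_mul_real (inv_pos.mpr (Complex.normSq_pos.mpr hxa)) v
    have hx2 : ‖x‖ ^ 2 = x.re ^ 2 + x.im ^ 2 := by
      rw [Complex.sq_norm, Complex.normSq_apply]; ring
    have ha2 : r ^ 2 = a.re ^ 2 + a.im ^ 2 := by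
      rw [← har, Complex.sq_norm, Complex.normSq_apply]; ring
    have hvre : v.re = ‖x‖ ^ 2 - r ^ 2 := by
      rw [hx2, ha2]
      simp [hv, Complex.mul_re, Complex.sub_re, Complex.sub_im, Complex.add_re, Complex.add_im]
      ring
    have hvrepos : 0 < v.re := by rw [hvre]; nlinarith
    have hvim : v.im ≤ 2 * ‖x‖ * r := by
      have him : v.im = 2 * (x.im * a.re - x.re * a.im) := by
        simp [hv, Complex.mul_im, Complex.sub_re, Complex.sub_im, Complex.add_re, Complex.add_im]
        ring
      have h5 : (x * (starRingEnd ℂ) a).im = x.im * a.re - x.re * a.im := by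
        simp [Complex.mul_im]; ring
      have h6 := Complex.abs_im_le_norm (x * (starRingEnd ℂ) a)
      rw [h5] at h6
      have habs : ‖x * (starRingEnd ℂ) a‖ = ‖x‖ * r := by
        rw [norm_mul, Complex.norm_conj, har]
      rw [habs] at h6
      have := (abs_le.mp (le_refl |x.im * a.re - x.re * a.im|)).2
      have h7 : x.im * a.re - x.re * a.im ≤ ‖x‖ * r :=
        (le_abs_self _).trans h6
      linarith
    have hvbound1 : 0 < θ + π := by linarith
    have hvbound2 : θ + π < π / 2 := by linarith
    have hvarg : v.arg = θ + π := by rw [← hargv, hargneg]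
    have hargin : v.arg = Real.arctan (v.im / v.re) := by
      rw [← Complex.tan_arg v, Real.arctan_tan (by rw [hvarg]; linarith) (by rw [hvarg]; linarith)]
    set u := r / ‖x‖ with hu
    have hu1 : 0 < u := by positivity
    have hu2 : u < 1 := (div_lt_one hx0).mpr hcase
    have hquot : v.im / v.re ≤ 2 * u / (1 - u ^ 2) := by
      have hne2 : (0:ℝ) < ‖x‖ ^ 2 - r ^ 2 := by nlinarith
      have hne3 : (0:ℝ) < 1 - u ^ 2 := by nlinarith
      have heq : 2 * u / (1 - u ^ 2) = 2 * ‖x‖ * r / (‖x‖ ^ 2 - r ^ 2) := by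
        rw [div_eq_div_iff hne3.ne' hne2.ne', hu]
        field_simp
      rw [heq, ← hvre]
      gcongr
    have hchain : v.arg ≤ 2 * Real.arctan u := by
      rw [hargin, Real.two_mul_arctan (by linarith) hu2]
      exact Real.arctan_strictMono.monotone hquot
    have hfinal : π + θ ≤ 2 * u := by
      have h8 := my_arctan_le_self hu1.le
      linarith [hvarg ▸ hchain]
    calc ‖x‖ * (π + θ) ≤ ‖x‖ * (2 * u) :=
          mul_le_mul_of_nonneg_left hfinal hx0.le
      _ = 2 * r := by rw [hu]; field_simp

/-- If `-π/(2|ε|) < Re((ε/|ε|)·u_ε(x)) < -π/(4|ε|)`, where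
`u_ε(x) = (1/(2iε)) log((iε-x)/(iε+x))`, then
`|x| ≤ 1/(π/(2|ε|) + Re((ε/|ε|)·u_ε(x)))`. -/
theorem stmt_7 (ε : ℂ) (hε : ε ≠ 0) (x : ℂ)
    (h1 : -(π / (2 * ‖ε‖)) <
      ((ε / (‖ε‖ : ℂ)) *
        ((1 / (2 * Complex.I * ε)) *
          Complex.log ((Complex.I * ε - x) / (Complex.I * ε + x)))).re)
    (h2 : ((ε / (‖ε‖ : ℂ)) *
        ((1 / (2 * Complex.I * ε)) *
          Complex.log ((Complex.I * ε - x) / (Complex.I * ε + x)))).re <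
      -(π / (4 * ‖ε‖))) :
    ‖x‖ ≤
      1 / (π / (2 * ‖ε‖) +
        ((ε / (‖ε‖ : ℂ)) *
          ((1 / (2 * Complex.I * ε)) *
            Complex.log ((Complex.I * ε - x) / (Complex.I * ε + x)))).re) := by
  have hr : (0:ℝ) < ‖ε‖ := norm_pos_iff.mpr hε
  set w : ℂ := (Complex.I * ε - x) / (Complex.I * ε + x) with hw
  have key : ((ε / (‖ε‖ : ℂ)) * ((1 / (2 * Complex.I * ε)) * Complex.log w)).re
      = w.arg / (2 * ‖ε‖) := by
    have hh : (ε / (‖ε‖ : ℂ)) * ((1 / (2 * Complex.I * ε)) * Complex.log w)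
        = (Complex.log w * (-Complex.I)) / ((2 * ‖ε‖ : ℝ) : ℂ) := by
      have hrC : ((‖ε‖ : ℝ) : ℂ) ≠ 0 := by exact_mod_cast hr.ne'
      push_cast
      field_simp
      ring_nf
      simp [Complex.I_sq]
    rw [hh, Complex.div_ofReal_re]
    simp [Complex.mul_re, Complex.log_im]
  rw [key] at h1 h2 ⊢
  set θ := w.arg with hθdef
  have h2r : (0:ℝ) < 2 * ‖ε‖ := by positivity
  have hθ1 : -π < θ := by
    rw [← neg_div] at h1
    exact (div_lt_div_iff_of_pos_right h2r).mp h1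
  have hθ2 : θ < -(π / 2) := by
    have heq : (-(π / 2)) / (2 * ‖ε‖) = -(π / (4 * ‖ε‖)) := by ring
    exact (div_lt_div_iff_of_pos_right h2r).mp (heq ▸ h2)
  have hmain := my_geom (Complex.I * ε) x (‖ε‖) hr (by simp) (hw ▸ hθ1) (hw ▸ hθ2)
  rw [← hw, ← hθdef] at hmain
  have hs : π / (2 * ‖ε‖) + θ / (2 * ‖ε‖)
      = (π + θ) / (2 * ‖ε‖) := by ring
  rw [hs, le_div_iff₀ (div_pos (by linarith) h2r), ← mul_div_assoc, div_le_one h2r]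
  exact hmain
end

section
/- Let C be a compact subset of the complex plane not containing 0 and contained in a sector {x : |Im x| ≤ -γ Re x, |x| ≤ R} for some γ, R > 0. Then the functions u_ε(x) + π/(2ε), where u_ε(x) = (1/ε)·arctan(x/ε), converge uniformly on C to -1/x as ε → 0 with Re ε > 0 and |Im ε| < c|ε|². -/
open Real

set_option maxHeartbeats 1000000

lemma log_neg_of_im_pos' {z : ℂ} (hz : 0 < z.im) :
    Complex.log (-z) = Complex.log z - (π : ℝ) * Complex.I := by
  apply Complex.ext
  · simp [Complex.log_re]
  · simp [Complex.log_im, Complex.arg_neg_eq_arg_sub_pi_of_im_pos hz]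

/-- On a compact subset `C` of the sector `{x : |Im x| ≤ -γ Re x, 0 < |x| ≤ R}`, the
functions `u_ε(x) + π/(2ε)` converge uniformly to `-1/x` as `ε → 0` with `Re ε > 0`
and `|Im ε| < c|ε|²`, where `u_ε(x) = (1/(2iε)) log((iε-x)/(iε+x))`. -/
theorem stmt_8 (γ R c : ℝ) (hγ : 0 < γ) (hR : 0 < R) (hc : 0 < c)
    (C : Set ℂ) (hC : IsCompact C)
    (hsec : ∀ x ∈ C, |x.im| ≤ -γ * x.re ∧ ‖x‖ ≤ R ∧ x ≠ 0) :
    ∀ δ : ℝ, 0 < δ → ∃ η : ℝ, 0 < η ∧ ∀ ε : ℂ, ε ≠ 0 → ‖ε‖ < η →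
      0 < ε.re → |ε.im| < c * ‖ε‖ ^ 2 →
      ∀ x ∈ C,
        ‖(1 / (2 * Complex.I * ε)) *
            Complex.log ((Complex.I * ε - x) / (Complex.I * ε + x)) +
            (π : ℂ) / (2 * ε) - (-1 / x)‖ < δ := by
  intro δ hδ
  rcases Set.eq_empty_or_nonempty C with hCe | hCne
  · exact ⟨1, one_pos, fun ε _ _ _ _ x hx => by simp [hCe] at hx⟩
  obtain ⟨x₀, hx₀C, hmin⟩ := hC.exists_isMinOn hCne continuous_norm.continuousOn
  set m := ‖x₀‖ with hm_def
  have hm : 0 < m := by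
    have h := (hsec x₀ hx₀C).2.2
    exact norm_pos_iff.mpr h
  have hmle : ∀ x ∈ C, m ≤ ‖x‖ := fun x hx => hmin hx
  set s := Real.sqrt (1 + γ ^ 2) with hs_def
  have hs : 0 < s := Real.sqrt_pos.2 (by positivity)
  have hs2 : s ^ 2 = 1 + γ ^ 2 := Real.sq_sqrt (by positivity)
  refine ⟨min (min (m/8) (δ*m^2/11)) (min (1/(2*c)) (m/(2*c*R*s))), by positivity, ?_⟩
  intro ε hε0 hεη hεre hεim x hxC
  obtain ⟨hq, hxR, hx0⟩ := hsec x hxC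
  set e := ‖ε‖ with he_def
  have he : 0 < e := norm_pos_iff.mpr hε0
  have he1 : e < m/8 := lt_of_lt_of_le hεη (le_trans (min_le_left _ _) (min_le_left _ _))
  have he2 : e < δ*m^2/11 := lt_of_lt_of_le hεη (le_trans (min_le_left _ _) (min_le_right _ _))
  have he3 : e < 1/(2*c) := lt_of_lt_of_le hεη (le_trans (min_le_right _ _) (min_le_left _ _))
  have he4 : e < m/(2*c*R*s) := lt_of_lt_of_le hεη (le_trans (min_le_right _ _) (min_le_right _ _))
  have hxm : m ≤ ‖x‖ := hmle x hxC
  rw [show (2 * Complex.I * ε : ℂ) = 2 * (Complex.I * ε) by ring]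
  set A := Complex.I * ε with hA_def
  have hAabs : ‖A‖ = e := by
    rw [hA_def, norm_mul, Complex.norm_I, one_mul]
  have hA0 : A ≠ 0 := by
    rw [hA_def]; exact mul_ne_zero Complex.I_ne_zero hε0
  have hxAabs : m/2 ≤ ‖x + A‖ := by
    have h1 : ‖x‖ - ‖A‖ ≤ ‖x + A‖ := by
      have h := norm_sub_norm_le x (-A)
      simpa [sub_neg_eq_add] using h
    rw [hAabs] at h1
    linarith
  have hxA : x + A ≠ 0 := by
    intro h
    rw [h, norm_zero] at hxAabs
    linarith
  -- the imaginary part of z is positive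
  set z := (x - A)/(x + A) with hz_def
  have hp0 : x.re < 0 := by
    have h1 : 0 ≤ -γ * x.re := le_trans (abs_nonneg _) hq
    have h2 : x.re ≤ 0 := by nlinarith
    rcases h2.lt_or_eq with h | h
    · exact h
    · exfalso
      apply hx0
      have hq0 : x.im = 0 := by
        have h' := hq
        rw [h] at h'
        exact abs_nonpos_iff.mp (by simpa using h')
      exact Complex.ext_iff.mpr ⟨by simpa using h, by simpa using hq0⟩
  have hpge : m / s ≤ -x.re := by
    have habs2 : ‖x‖^2 = x.re^2 + x.im^2 := by
      rw [Complex.sq_norm, Complex.normSq_apply]; ring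
    have h2 : x.im^2 ≤ γ^2 * x.re^2 := by
      nlinarith [abs_nonneg x.im, sq_abs x.im, sq_abs (-γ * x.re)]
    have h1 : m^2 ≤ x.re^2 * s^2 := by nlinarith
    rw [div_le_iff₀ hs]
    have ht : 0 < -x.re * s := mul_pos (neg_pos.2 hp0) hs
    have hmt : 0 < -x.re * s + m := by linarith
    nlinarith [h1, hmt]
  have hab : ε.re^2 + ε.im^2 = e^2 := by
    rw [he_def, Complex.sq_norm, Complex.normSq_apply]; ring
  have hce : c * e < 1/2 := by
    have := he3
    rw [lt_div_iff₀ (by positivity : (0:ℝ) < 2*c)] at this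
    linarith [mul_comm e (2*c)]
  have hb2 : ε.im^2 < (e/2)^2 := by
    have hb : |ε.im| < e/2 := by
      calc |ε.im| < c * e^2 := hεim
        _ = (c*e) * e := by ring
        _ < (1/2) * e := by nlinarith
        _ = e/2 := by ring
    nlinarith [abs_nonneg ε.im, sq_abs ε.im]
  have ha : e/2 < ε.re := by nlinarith
  have hqR : |x.im| ≤ R := le_trans (Complex.abs_im_le_norm x) hxR
  have hfin : ε.re * x.re + ε.im * x.im < 0 := by
    have h3 : (e/2)*(m/s) < ε.re * (-x.re) :=
      mul_lt_mul ha hpge (by positivity) (le_of_lt (lt_trans (by positivity) ha))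
    have h2crs : (0:ℝ) < 2*c*R*s := by positivity
    have he4' : e * (2*c*R*s) < m := by
      rw [lt_div_iff₀ h2crs] at he4; exact he4
    have h4 : c*e^2*R < (e/2)*(m/s) := by
      rw [div_mul_div_comm, lt_div_iff₀ (by positivity : (0:ℝ) < 2*s)]
      nlinarith [mul_lt_mul_of_pos_left he4' he]
    have h5 : ε.im * x.im ≤ c*e^2*R := by
      calc ε.im * x.im ≤ |ε.im * x.im| := le_abs_self _
        _ = |ε.im| * |x.im| := abs_mul _ _
        _ ≤ (c*e^2) * R := by
          apply mul_le_mul hεim.le hqR (abs_nonneg _) (by positivity)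
        _ = c*e^2*R := by ring
    nlinarith
  have hIm : 0 < z.im := by
    have hns : 0 < Complex.normSq (x + A) := Complex.normSq_pos.2 hxA
    have hzim : z.im = (-2*(ε.re * x.re + ε.im * x.im)) / Complex.normSq (x+A) := by
      rw [hz_def, Complex.div_im]
      simp only [Complex.sub_im, Complex.sub_re, Complex.add_im, Complex.add_re,
        hA_def, Complex.mul_re, Complex.mul_im, Complex.I_re, Complex.I_im]
      ring
    rw [hzim]
    apply div_pos (by linarith) hns
  -- branch of the logarithm
  have hratio : (A - x)/(A + x) = -z := by
    rw [hz_def, add_comm A x, show A - x = -(x - A) by ring, neg_div]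
  have hlog : Complex.log ((A - x)/(A + x)) = Complex.log z - (π : ℝ) * Complex.I := by
    rw [hratio, log_neg_of_im_pos' hIm]
  rw [hlog]
  -- simplify the π terms away
  have hI2 : (Complex.I : ℂ) * Complex.I = -1 := Complex.I_mul_I
  have hsimp : (1/(2*A)) * (Complex.log z - (π:ℝ) * Complex.I) + (π : ℂ)/(2*ε) - (-1/x)
      = (1/(2*A)) * (Complex.log z) + 1/x := by
    rw [hA_def]
    field_simp
    ring_nf
  rw [hsimp]
  -- decompose
  set u := -2*A/(x+A) with hu_def
  have hzu : z = 1 + u := by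
    rw [hz_def, hu_def]
    field_simp
    ring
  have hdecomp : (1/(2*A)) * (Complex.log z) + 1/x
      = (1/(2*A)) * (Complex.log z - u) + A/(x*(x+A)) := by
    rw [hu_def]
    field_simp
    ring
  rw [hdecomp]
  -- norm estimates
  have hu_abs : ‖u‖ ≤ 4*e/m := by
    rw [hu_def, norm_div, show (-2*A : ℂ) = -(2*A) by ring, norm_neg, norm_mul, hAabs]
    have h2 : ‖(2:ℂ)‖ = 2 := by norm_num
    rw [h2]
    rw [div_le_div_iff₀ (lt_of_lt_of_le (by positivity) hxAabs) (by positivity)]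
    nlinarith [mul_le_mul_of_nonneg_left hxAabs (le_of_lt he)]
  have hu_half : ‖u‖ ≤ 1/2 := by
    refine le_trans hu_abs ?_
    rw [div_le_iff₀ hm]
    linarith
  have hL : ‖Complex.log z - u‖ ≤ ‖u‖ ^ 2 := by
    have h := Complex.norm_log_one_add_sub_self_le (z := u)
      (by linarith)
    rw [← hzu] at h
    have hinv : (1 - ‖u‖)⁻¹ ≤ 2 := by
      rw [inv_le_comm₀ (by linarith) (by norm_num)]
      linarith
    calc ‖Complex.log z - u‖ ≤ ‖u‖ ^ 2 * (1 - ‖u‖)⁻¹ / 2 := h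
      _ ≤ ‖u‖ ^ 2 * 2 / 2 := by
          apply div_le_div_of_nonneg_right ?_ (by norm_num)
          exact mul_le_mul_of_nonneg_left hinv (by positivity)
      _ = ‖u‖ ^ 2 := by ring
  have h1 : ‖(1/(2*A)) * (Complex.log z - u)‖ ≤ 8*e/m^2 := by
    rw [norm_mul, norm_div, norm_one, norm_mul, hAabs]
    have h2 : ‖(2:ℂ)‖ = 2 := by norm_num
    rw [h2]
    have hub : ‖Complex.log z - u‖ ≤ (4*e/m)^2 := by
      exact le_trans hL (pow_le_pow_left₀ (norm_nonneg u) hu_abs 2)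
    calc 1/(2*e) * ‖Complex.log z - u‖ ≤ 1/(2*e) * (4*e/m)^2 := by
          apply mul_le_mul_of_nonneg_left hub (by positivity)
      _ = 8*e/m^2 := by field_simp; ring
  have h2 : ‖A/(x*(x+A))‖ ≤ 2*e/m^2 := by
    rw [norm_div, hAabs, norm_mul]
    rw [div_le_div_iff₀ (mul_pos (norm_pos_iff.mpr hx0) (norm_pos_iff.mpr hxA)) (by positivity)]
    have hmm : m * (m/2) ≤ ‖x‖ * ‖x+A‖ :=
      mul_le_mul hxm hxAabs (by positivity) (by positivity)
    have := mul_le_mul_of_nonneg_left hmm (by positivity : (0:ℝ) ≤ 2*e)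
    linarith
  calc ‖(1/(2*A)) * (Complex.log z - u) + A/(x*(x+A))‖
      ≤ ‖(1/(2*A)) * (Complex.log z - u)‖ + ‖A/(x*(x+A))‖ :=
        norm_add_le _ _
    _ ≤ 8*e/m^2 + 2*e/m^2 := add_le_add h1 h2
    _ = 10*e/m^2 := by ring
    _ < δ := by
        rw [div_lt_iff₀ (by positivity)]
        have h0 : 0 < δ*m^2 := by positivity
        linarith
end

section
/- Let ρ > 1 be real, ρ' with 1 < ρ' < ρ, and 0 < γ' small enough that ρ' < ρ(1-γ')/√(1+γ'²). If a complex number x satisfies |Im x| ≤ γ'·|Re x| and Re x < 0, then |1 + ρx| ≤ 1 - ρ·((1-γ')/√(1+γ'²))·|x|, provided ρ|x| is small enough (e.g., ρ|x| ≤ 1). -/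
open Real

/-- If `|Im x| ≤ γ'·|Re x|`, `Re x < 0` and `ρ|x| ≤ 1` with `ρ > 1`,
`0 < γ' < 1` and `ρ' < ρ(1-γ')/√(1+γ'²)` for some `ρ' > 1`, then
`|1 + ρx| ≤ 1 - ρ·((1-γ')/√(1+γ'²))·|x|`. -/
theorem stmt_14 (ρ ρ' γ' : ℝ) (hρ : 1 < ρ) (hρ' : 1 < ρ')
    (hγ0 : 0 < γ') (hγ1 : γ' < 1)
    (hcomp : ρ' < ρ * (1 - γ') / Real.sqrt (1 + γ' ^ 2))
    (x : ℂ) (hre : x.re < 0) (him : |x.im| ≤ γ' * |x.re|)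
    (hsmall : ρ * ‖x‖ ≤ 1) :
    ‖1 + (ρ : ℂ) * x‖ ≤
      1 - ρ * ((1 - γ') / Real.sqrt (1 + γ' ^ 2)) * ‖x‖ := by
  set s := Real.sqrt (1 + γ' ^ 2) with hs
  have hspos : 0 < s := Real.sqrt_pos.mpr (by positivity)
  have hssq : s ^ 2 = 1 + γ' ^ 2 := Real.sq_sqrt (by positivity)
  have hs1 : 1 ≤ s := by nlinarith [hssq, hspos, sq_nonneg γ']
  set a := ‖x‖ with ha
  have ha0 : 0 ≤ a := norm_nonneg x
  have habs : a ^ 2 = x.re ^ 2 + x.im ^ 2 := by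
    rw [ha, Complex.sq_norm, Complex.normSq_apply]; ring
  have haim : x.im ^ 2 ≤ γ' ^ 2 * x.re ^ 2 := by
    have h1 : |x.im| ^ 2 ≤ (γ' * |x.re|) ^ 2 :=
      pow_le_pow_left₀ (abs_nonneg _) him 2
    calc x.im ^ 2 = |x.im| ^ 2 := (sq_abs _).symm
      _ ≤ (γ' * |x.re|) ^ 2 := h1
      _ = γ' ^ 2 * x.re ^ 2 := by rw [mul_pow, sq_abs]
  -- key: a ≤ s * (-x.re)
  have hkey : a ≤ s * (-x.re) := by
    have hb : 0 ≤ s * (-x.re) := mul_nonneg hspos.le (by linarith)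
    have h1 : a ^ 2 ≤ (s * (-x.re)) ^ 2 := by nlinarith
    nlinarith [h1, hb, ha0]
  set t := (1 - γ') / s with ht
  have hts : t * s = 1 - γ' := by rw [ht]; field_simp
  have ht0 : 0 < t := div_pos (by linarith) hspos
  have ht1 : t ≤ 1 := by
    rw [ht, div_le_one hspos]; linarith
  have hrhs : 0 ≤ 1 - ρ * t * a := by
    nlinarith [mul_le_mul_of_nonneg_left ht1 (by positivity : (0:ℝ) ≤ ρ * a)]
  have hlhs2 : ‖1 + (ρ : ℂ) * x‖ ^ 2 = 1 + 2 * ρ * x.re + ρ ^ 2 * a ^ 2 := by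
    rw [Complex.sq_norm]
    simp only [Complex.normSq_apply, Complex.add_re, Complex.add_im, Complex.mul_re,
      Complex.mul_im, Complex.one_re, Complex.one_im, Complex.ofReal_re, Complex.ofReal_im]
    linear_combination -ρ ^ 2 * habs
  have h2 : s * x.re ≤ -a := by nlinarith [hkey]
  have h4 : ρ * a ≤ s := hsmall.trans hs1
  have key2 : s ^ 2 * (1 + 2 * ρ * x.re + ρ ^ 2 * a ^ 2) ≤ (s - ρ * (1 - γ') * a) ^ 2 := by
    have hA : 2 * ρ * s * (s * x.re) ≤ 2 * ρ * s * (-a) :=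
      mul_le_mul_of_nonneg_left h2 (by positivity)
    have hB : ρ * a * (ρ * a) ≤ s * (ρ * a) :=
      mul_le_mul_of_nonneg_right h4 (by positivity)
    have hD : 2 * γ' * (ρ * a * (ρ * a)) ≤ 2 * γ' * (s * (ρ * a)) :=
      mul_le_mul_of_nonneg_left hB (by positivity)
    have hC : ρ ^ 2 * s ^ 2 * a ^ 2 = (1 + γ' ^ 2) * ρ ^ 2 * a ^ 2 := by
      rw [hssq]; ring
    linarith [hA, hD, hC]
  have hsq : ‖1 + (ρ : ℂ) * x‖ ^ 2 ≤ (1 - ρ * t * a) ^ 2 := by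
    rw [hlhs2]
    have he : (s - ρ * (1 - γ') * a) ^ 2 = s ^ 2 * (1 - ρ * t * a) ^ 2 := by
      linear_combination (2 * ρ * s * a - ρ ^ 2 * a ^ 2 * (t * s + 1 - γ')) * hts
    rw [he] at key2
    exact le_of_mul_le_mul_left key2 (by positivity : (0:ℝ) < s ^ 2)
  calc ‖1 + (ρ : ℂ) * x‖
      = Real.sqrt (‖1 + (ρ : ℂ) * x‖ ^ 2) := by
        rw [Real.sqrt_sq (norm_nonneg _)]
    _ ≤ Real.sqrt ((1 - ρ * t * a) ^ 2) := Real.sqrt_le_sqrt hsq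
    _ = 1 - ρ * t * a := Real.sqrt_sq hrhs
end
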